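/- (Uniqueness of solutions of the μ-flow equation.) In the finite MDP setting with weights η : ℕ → ℝ, η(k) ≥ 0, ∑_k η(k) = 1, let π be a policy and let f : S → S × A → ℝ be nonnegative and satisfy, for all s₀, s, a: f(s₀)(s,a) = π s a · ( ∑_{a'} P^η_π((s,a')|s₀) + γ · ∑_{(s',a')} f(s₀)(s',a') · 𝒫(s',a')(s) ). Then f(s₀)(s,a) = μ_π((s,a)|s₀) for all s₀, s, a. -/

import Mathlib

open scoped BigOperators Classical

/-- `n`-step state–action distribution of the stationary policy `π` started at a state. -/
noncomputable def PstepS {S A : Type*} [Fintype S] [Fintype A]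
    (P : S × A → PMF S) (π : S → PMF A) : ℕ → S → S × A → ℝ
  | 0, s₀, x => if x.1 = s₀ then (π x.1 x.2).toReal else 0
  | n + 1, s₀, x => ∑ y : S × A, PstepS P π n s₀ y * (P y x.1).toReal * (π x.1 x.2).toReal

/-- `n`-step state–action distribution of `π` started at a state–action pair. -/
noncomputable def PstepSA {S A : Type*} [Fintype S] [Fintype A]
    (P : S × A → PMF S) (π : S → PMF A) : ℕ → S × A → S × A → ℝ
  | 0, y, x => if x = y then 1 else 0
  | n + 1, y, x => ∑ z : S × A, PstepSA P π n y z * (P z x.1).toReal * (π x.1 x.2).toReal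

/-- η-weighted future state distribution, started at a state. -/
noncomputable def PetaS {S A : Type*} [Fintype S] [Fintype A]
    (P : S × A → PMF S) (π : S → PMF A) (η : ℕ → ℝ) (s₀ : S) (x : S × A) : ℝ :=
  ∑' k, η k * PstepS P π k s₀ x

/-- η-weighted future state distribution, started at a state–action pair. -/
noncomputable def PetaSA {S A : Type*} [Fintype S] [Fintype A]
    (P : S × A → PMF S) (π : S → PMF A) (η : ℕ → ℝ) (y : S × A) (x : S × A) : ℝ :=
  ∑' k, η k * PstepSA P π k y x

/-- γ-discounted occupancy measure, started at a state. -/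
noncomputable def rhoS {S A : Type*} [Fintype S] [Fintype A]
    (P : S × A → PMF S) (π : S → PMF A) (γ : ℝ) (s₀ : S) (x : S × A) : ℝ :=
  ∑' t, γ ^ t * PstepS P π t s₀ x

/-- γ-discounted occupancy measure, started at a state–action pair. -/
noncomputable def rhoSA {S A : Type*} [Fintype S] [Fintype A]
    (P : S × A → PMF S) (π : S → PMF A) (γ : ℝ) (y : S × A) (x : S × A) : ℝ :=
  ∑' t, γ ^ t * PstepSA P π t y x

/-- η-weighted, γ-discounted future occupancy measure `μ_π`. -/
noncomputable def muS {S A : Type*} [Fintype S] [Fintype A]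
    (P : S × A → PMF S) (π : S → PMF A) (γ : ℝ) (η : ℕ → ℝ) (s₀ : S) (x : S × A) : ℝ :=
  ∑' t, ∑' k, γ ^ t * η k * PstepS P π (t + k) s₀ x

section aux
variable {S A : Type*} [Fintype S] [Fintype A]

lemma pmf_sum_toReal {B : Type*} [Fintype B] (p : PMF B) : ∑ b : B, (p b).toReal = 1 := by
  rw [← ENNReal.toReal_sum (fun b _ => p.apply_ne_top b), ← tsum_fintype (L := SummationFilter.unconditional B), p.tsum_coe,
    ENNReal.toReal_one]

variable (P : S × A → PMF S) (π : S → PMF A)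

lemma PstepS_nonneg (n : ℕ) (s₀ : S) (x : S × A) : 0 ≤ PstepS P π n s₀ x := by
  induction n generalizing x with
  | zero => simp only [PstepS]; split <;> positivity
  | succ n ih =>
    simp only [PstepS]
    exact Finset.sum_nonneg fun y _ =>
      mul_nonneg (mul_nonneg (ih y) ENNReal.toReal_nonneg) ENNReal.toReal_nonneg

lemma PstepS_sum_one (n : ℕ) (s₀ : S) : ∑ x : S × A, PstepS P π n s₀ x = 1 := by
  induction n with
  | zero =>
    rw [Fintype.sum_prod_type]
    simp only [PstepS]
    simp [Finset.sum_ite_eq', pmf_sum_toReal]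
  | succ n ih =>
    simp only [PstepS]
    rw [Fintype.sum_prod_type]
    simp only [← Finset.sum_mul]
    calc ∑ s : S, ∑ a : A, (∑ y : S × A, PstepS P π n s₀ y * (P y s).toReal) * (π s a).toReal
        = ∑ s : S, (∑ y : S × A, PstepS P π n s₀ y * (P y s).toReal) * ∑ a : A, (π s a).toReal := by
          simp [Finset.mul_sum]
      _ = ∑ s : S, ∑ y : S × A, PstepS P π n s₀ y * (P y s).toReal := by
          simp [pmf_sum_toReal]
      _ = ∑ y : S × A, PstepS P π n s₀ y * ∑ s : S, (P y s).toReal := by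
          rw [Finset.sum_comm]; simp [Finset.mul_sum]
      _ = 1 := by simp [pmf_sum_toReal, ih]

lemma PstepS_le_one (n : ℕ) (s₀ : S) (x : S × A) : PstepS P π n s₀ x ≤ 1 := by
  calc PstepS P π n s₀ x ≤ ∑ y : S × A, PstepS P π n s₀ y :=
        Finset.single_le_sum (fun y _ => PstepS_nonneg P π n s₀ y) (Finset.mem_univ x)
    _ = 1 := PstepS_sum_one P π n s₀

lemma PstepS_fact (n : ℕ) (s₀ s : S) (a : A) :
    PstepS P π n s₀ (s, a) = (π s a).toReal * ∑ a' : A, PstepS P π n s₀ (s, a') := by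
  cases n with
  | zero =>
    simp only [PstepS]
    by_cases h : s = s₀ <;> simp [h, pmf_sum_toReal]
  | succ n =>
    simp only [PstepS, ← Finset.sum_mul]
    rw [← Finset.mul_sum, pmf_sum_toReal, mul_one, mul_comm]

end aux

section main
variable {S A : Type*} [Fintype S] [Fintype A]
variable (P : S × A → PMF S) (π : S → PMF A) {γ : ℝ} {η : ℕ → ℝ}

lemma summable_inner (hηs : Summable η) (hη0 : ∀ k, 0 ≤ η k) (hγ0 : 0 ≤ γ)
    (t : ℕ) (s₀ : S) (x : S × A) (c : ℝ) (hc0 : 0 ≤ c) (hc1 : c ≤ 1) :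
    Summable fun k => γ ^ t * η k * PstepS P π (t + k) s₀ x * c := by
  apply Summable.of_nonneg_of_le
    (fun k => mul_nonneg (mul_nonneg (mul_nonneg (pow_nonneg hγ0 t) (hη0 k))
      (PstepS_nonneg P π (t + k) s₀ x)) hc0)
    (fun k => ?_) (hηs.mul_left (γ ^ t))
  calc γ ^ t * η k * PstepS P π (t + k) s₀ x * c
      = (γ ^ t * η k) * (PstepS P π (t + k) s₀ x * c) := by ring
    _ ≤ (γ ^ t * η k) * 1 :=
        mul_le_mul_of_nonneg_left
          (mul_le_one₀ (PstepS_le_one P π (t + k) s₀ x) hc0 hc1)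
          (mul_nonneg (pow_nonneg hγ0 t) (hη0 k))
    _ = γ ^ t * η k := mul_one _

lemma tsum_inner_le (hηs : Summable η) (hη0 : ∀ k, 0 ≤ η k) (hη1 : ∑' k, η k = 1)
    (hγ0 : 0 ≤ γ) (t : ℕ) (s₀ : S) (x : S × A) (c : ℝ) (hc0 : 0 ≤ c) (hc1 : c ≤ 1) :
    ∑' k, γ ^ t * η k * PstepS P π (t + k) s₀ x * c ≤ γ ^ t := by
  have h := Summable.tsum_le_tsum (f := fun k => γ ^ t * η k * PstepS P π (t + k) s₀ x * c)
    (g := fun k => γ ^ t * η k) ?_ (summable_inner P π hηs hη0 hγ0 t s₀ x c hc0 hc1)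
    (hηs.mul_left (γ ^ t))
  · rwa [tsum_mul_left, hη1, mul_one] at h
  · intro k
    calc γ ^ t * η k * PstepS P π (t + k) s₀ x * c
        = (γ ^ t * η k) * (PstepS P π (t + k) s₀ x * c) := by ring
      _ ≤ (γ ^ t * η k) * 1 :=
          mul_le_mul_of_nonneg_left
            (mul_le_one₀ (PstepS_le_one P π (t + k) s₀ x) hc0 hc1)
            (mul_nonneg (pow_nonneg hγ0 t) (hη0 k))
      _ = γ ^ t * η k := mul_one _

lemma summable_outer (hηs : Summable η) (hη0 : ∀ k, 0 ≤ η k) (hη1 : ∑' k, η k = 1)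
    (hγ0 : 0 ≤ γ) (hγ1 : γ < 1) (s₀ : S) (x : S × A) (c : ℝ) (hc0 : 0 ≤ c) (hc1 : c ≤ 1) :
    Summable fun t => ∑' k, γ ^ t * η k * PstepS P π (t + k) s₀ x * c := by
  apply Summable.of_nonneg_of_le
    (fun t => tsum_nonneg fun k =>
      mul_nonneg (mul_nonneg (mul_nonneg (pow_nonneg hγ0 t) (hη0 k))
        (PstepS_nonneg P π (t + k) s₀ x)) hc0)
    (fun t => tsum_inner_le P π hηs hη0 hη1 hγ0 t s₀ x c hc0 hc1)
    (summable_geometric_of_lt_one hγ0 hγ1)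

lemma muS_flow (hγ0 : 0 < γ) (hγ1 : γ < 1) (hηs : Summable η) (hη0 : ∀ k, 0 ≤ η k)
    (hη1 : ∑' k, η k = 1) (s₀ s : S) (a : A) :
    muS P π γ η s₀ (s, a) =
      (π s a).toReal * ((∑ a' : A, PetaS P π η s₀ (s, a')) +
        γ * ∑ y : S × A, muS P π γ η s₀ y * (P y s).toReal) := by
  have hγ0' : (0:ℝ) ≤ γ := le_of_lt hγ0
  have hsI : ∀ (t : ℕ) (x : S × A) (c : ℝ), 0 ≤ c → c ≤ 1 →
      Summable fun k => γ ^ t * η k * PstepS P π (t + k) s₀ x * c :=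
    fun t x c hc0 hc1 => summable_inner P π hηs hη0 hγ0' t s₀ x c hc0 hc1
  have hsO : ∀ (x : S × A) (c : ℝ), 0 ≤ c → c ≤ 1 →
      Summable fun t => ∑' k, γ ^ t * η k * PstepS P π (t + k) s₀ x * c :=
    fun x c hc0 hc1 => summable_outer P π hηs hη0 hη1 hγ0' hγ1 s₀ x c hc0 hc1
  have pys0 : ∀ y : S × A, 0 ≤ ((P y) s).toReal := fun y => ENNReal.toReal_nonneg
  have pys1 : ∀ y : S × A, ((P y) s).toReal ≤ 1 := by
    intro y
    calc ((P y) s).toReal ≤ ∑ s' : S, ((P y) s').toReal :=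
          Finset.single_le_sum (fun s' _ => ENNReal.toReal_nonneg) (Finset.mem_univ s)
      _ = 1 := pmf_sum_toReal _
  -- outer summability without the trailing `* c`
  have hsO1 : Summable fun t => ∑' k, γ ^ t * η k * PstepS P π (t + k) s₀ (s, a) := by
    simpa [mul_one] using hsO (s, a) 1 zero_le_one le_rfl
  rw [show muS P π γ η s₀ (s, a) = ∑' t, ∑' k, γ ^ t * η k * PstepS P π (t + k) s₀ (s, a) from rfl,
    Summable.tsum_eq_zero_add hsO1]
  -- the t = 0 part
  have h0 : ∑' k, γ ^ 0 * η k * PstepS P π (0 + k) s₀ (s, a) =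
      (π s a).toReal * ∑ a' : A, PetaS P π η s₀ (s, a') := by
    have step : ∀ k : ℕ, γ ^ 0 * η k * PstepS P π (0 + k) s₀ (s, a) =
        (π s a).toReal * ∑ a' : A, η k * PstepS P π k s₀ (s, a') := by
      intro k
      rw [pow_zero, one_mul, zero_add, PstepS_fact P π k s₀ s a]
      simp only [Finset.mul_sum]
      exact Finset.sum_congr rfl fun a' _ => by ring
    rw [tsum_congr step, tsum_mul_left]
    congr 1
    rw [Summable.tsum_finsetSum]
    · exact Finset.sum_congr rfl fun a' _ => rfl
    · intro a' _
      have := hsI 0 (s, a') 1 zero_le_one le_rfl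
      simpa [pow_zero, one_mul, zero_add, mul_one] using this
  rw [h0]
  -- the shifted part
  have hshift : ∑' t, ∑' k, γ ^ (t + 1) * η k * PstepS P π (t + 1 + k) s₀ (s, a) =
      (π s a).toReal * (γ * ∑ y : S × A, muS P π γ η s₀ y * ((P y) s).toReal) := by
    have step : ∀ t : ℕ, ∑' k, γ ^ (t + 1) * η k * PstepS P π (t + 1 + k) s₀ (s, a) =
        γ * (π s a).toReal *
          ∑ y : S × A, (∑' k, γ ^ t * η k * PstepS P π (t + k) s₀ y) * ((P y) s).toReal := by
      intro t
      have e1 : ∀ k : ℕ, γ ^ (t + 1) * η k * PstepS P π (t + 1 + k) s₀ (s, a) =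
          ∑ y : S × A, γ * (π s a).toReal *
            (γ ^ t * η k * PstepS P π (t + k) s₀ y * ((P y) s).toReal) := by
        intro k
        have : t + 1 + k = (t + k) + 1 := by omega
        rw [this, show PstepS P π (t + k + 1) s₀ (s, a) =
          ∑ y : S × A, PstepS P π (t + k) s₀ y * ((P y) s).toReal * ((π s) a).toReal from rfl,
          Finset.mul_sum]
        exact Finset.sum_congr rfl fun y _ => by ring
      rw [tsum_congr e1, Summable.tsum_finsetSum (fun y _ => ((hsI t y _ (pys0 y) (pys1 y)).mul_left _))]
      rw [Finset.mul_sum]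
      exact Finset.sum_congr rfl fun y _ => by
        rw [tsum_mul_left, tsum_mul_right]
    rw [tsum_congr step, tsum_mul_left]
    rw [Summable.tsum_finsetSum (fun y _ => ((by simpa [mul_one] using hsO y 1 zero_le_one le_rfl :
      Summable fun t => ∑' k, γ ^ t * η k * PstepS P π (t + k) s₀ y).mul_right _))]
    have : ∀ y : S × A, ∑' t, (∑' k, γ ^ t * η k * PstepS P π (t + k) s₀ y) * ((P y) s).toReal
        = muS P π γ η s₀ y * ((P y) s).toReal := fun y => tsum_mul_right
    rw [Finset.sum_congr rfl fun y _ => this y]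
    ring
  rw [hshift, mul_add]

end main

theorem stmt7 {S A : Type*} [Fintype S] [Fintype A] [Nonempty S] [Nonempty A]
    (P : S × A → PMF S) (π : S → PMF A) (γ : ℝ) (hγ : γ ∈ Set.Ioo (0 : ℝ) 1)
    (η : ℕ → ℝ) (hη0 : ∀ k, 0 ≤ η k) (hη1 : ∑' k, η k = 1)
    (f : S → S × A → ℝ) (hf0 : ∀ s₀ x, 0 ≤ f s₀ x)
    (hflow : ∀ (s₀ s : S) (a : A),
      f s₀ (s, a) =
        (π s a).toReal * ((∑ a' : A, PetaS P π η s₀ (s, a')) +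
          γ * ∑ y : S × A, f s₀ y * (P y s).toReal)) :
    ∀ (s₀ : S) (x : S × A), f s₀ x = muS P π γ η s₀ x := by
  obtain ⟨hγ0, hγ1⟩ := hγ
  have hηs : Summable η := by
    by_contra h
    rw [tsum_eq_zero_of_not_summable h] at hη1
    norm_num at hη1
  intro s₀
  have hμ := fun s a => muS_flow P π hγ0 hγ1 hηs hη0 hη1 s₀ s a
  set d : S × A → ℝ := fun x => f s₀ x - muS P π γ η s₀ x with hd_def
  have hd : ∀ (s : S) (a : A),
      d (s, a) = γ * (π s a).toReal * ∑ y : S × A, d y * ((P y) s).toReal := by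
    intro s a
    have : ∑ y : S × A, d y * ((P y) s).toReal =
        (∑ y : S × A, f s₀ y * ((P y) s).toReal) -
          ∑ y : S × A, muS P π γ η s₀ y * ((P y) s).toReal := by
      rw [← Finset.sum_sub_distrib]
      exact Finset.sum_congr rfl fun y _ =>
        sub_mul (f s₀ y) (muS P π γ η s₀ y) (((P y) s).toReal)
    rw [this]
    simp only [hd_def, hflow s₀ s a, hμ s a]
    ring
  have key : ∑ x : S × A, |d x| ≤ γ * ∑ x : S × A, |d x| := by
    have pis0 : ∀ (s : S) (a : A), (0:ℝ) ≤ ((π s) a).toReal := fun _ _ => ENNReal.toReal_nonneg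
    calc ∑ x : S × A, |d x| = ∑ s : S, ∑ a : A, |d (s, a)| := Fintype.sum_prod_type _
      _ ≤ ∑ s : S, ∑ a : A, γ * ((π s) a).toReal * ∑ y : S × A, |d y| * ((P y) s).toReal := by
          apply Finset.sum_le_sum; intro s _
          apply Finset.sum_le_sum; intro a _
          rw [hd s a, abs_mul, abs_of_nonneg (mul_nonneg (le_of_lt hγ0) (pis0 s a))]
          apply mul_le_mul_of_nonneg_left _ (mul_nonneg (le_of_lt hγ0) (pis0 s a))
          calc |∑ y : S × A, d y * ((P y) s).toReal|
              ≤ ∑ y : S × A, |d y * ((P y) s).toReal| := Finset.abs_sum_le_sum_abs _ _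
            _ = ∑ y : S × A, |d y| * ((P y) s).toReal := by
                exact Finset.sum_congr rfl fun y _ => by
                  rw [abs_mul, abs_of_nonneg ENNReal.toReal_nonneg]
      _ = γ * ∑ s : S, (∑ a : A, ((π s) a).toReal) * ∑ y : S × A, |d y| * ((P y) s).toReal := by
          rw [Finset.mul_sum]
          exact Finset.sum_congr rfl fun s _ => by
            rw [Finset.sum_mul, Finset.mul_sum]
            exact Finset.sum_congr rfl fun a _ => by ring
      _ = γ * ∑ s : S, ∑ y : S × A, |d y| * ((P y) s).toReal := by
          simp [pmf_sum_toReal]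
      _ = γ * ∑ y : S × A, |d y| * ∑ s : S, ((P y) s).toReal := by
          rw [Finset.sum_comm]
          simp [Finset.mul_sum]
      _ = γ * ∑ x : S × A, |d x| := by simp [pmf_sum_toReal]
  have hDnn : (0:ℝ) ≤ ∑ x : S × A, |d x| := Finset.sum_nonneg fun x _ => abs_nonneg _
  have hD0 : ∑ x : S × A, |d x| = 0 := by nlinarith
  intro x
  have : |d x| = 0 := by
    have := (Finset.sum_eq_zero_iff_of_nonneg (fun y _ => abs_nonneg (d y))).mp hD0 x
      (Finset.mem_univ x)
    exact this
  have : d x = 0 := abs_eq_zero.mp this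
  have := this
  simpa [hd_def, sub_eq_zero] using this
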